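/- Let A(ε) be an n×n complex-matrix-valued function analytic in ε near ε = 0, and let λ₀ be an eigenvalue of A(0) whose algebraic multiplicity (as a root of the characteristic polynomial of A(0)) is m. Then the following are equivalent: (i) the partial derivative with respect to ε of det(λI − A(ε)) at (ε, λ) = (0, λ₀) is nonzero; (ii) the eigenvalue λ₀ of A(0) has geometric multiplicity 1 (so its Jordan structure is a single m×m Jordan block), and there exist a nonzero vector u₀ with A(0)u₀ = λ₀u₀ and a nonzero vector v₀ with A(0)*v₀ = conj(λ₀)v₀ such that the inner product ⟨v₀, A′(0)u₀⟩ ≠ 0, where A′(0) is the derivative of A(ε) at ε = 0. -/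

import Mathlib

open Matrix

attribute [local instance] Matrix.normedAddCommGroup Matrix.normedSpace

variable {n : ℕ}

lemma eval_charpoly' (M : Matrix (Fin n) (Fin n) ℂ) (t : ℂ) :
    (M.charpoly).eval t = (t • (1 : Matrix (Fin n) (Fin n) ℂ) - M).det := by
  rw [Matrix.charpoly, ← Polynomial.coe_evalRingHom, RingHom.map_det]
  congr 1
  ext i j
  by_cases h : i = j <;>
    simp [h, Matrix.charmatrix_apply, Matrix.one_apply, Matrix.diagonal_apply]

lemma entry_hasDerivAt (A : ℂ → Matrix (Fin n) (Fin n) ℂ) (hA : AnalyticAt ℂ A 0) (i j : Fin n) :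
    HasDerivAt (fun ε => A ε i j) (deriv A 0 i j) 0 := by
  have h1 : HasDerivAt A (deriv A 0) 0 := hA.differentiableAt.hasDerivAt
  exact hasDerivAt_pi.mp (hasDerivAt_pi.mp h1 i) j

lemma jacobi (M : ℂ → Matrix (Fin n) (Fin n) ℂ) (M' : Matrix (Fin n) (Fin n) ℂ) (x : ℂ)
    (h : ∀ i j, HasDerivAt (fun ε => M ε i j) (M' i j) x) :
    HasDerivAt (fun ε => (M ε).det) ((Matrix.adjugate (M x) * M').trace) x := by
  have hprod : ∀ σ : Equiv.Perm (Fin n),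
      HasDerivAt (fun ε => ∏ i, M ε (σ i) i)
        (∑ i, (∏ j ∈ Finset.univ.erase i, M x (σ j) j) • M' (σ i) i) x :=
    fun σ => HasDerivAt.fun_finsetProd (fun i _ => h (σ i) i)
  have H : HasDerivAt (fun ε => (M ε).det)
      (∑ σ : Equiv.Perm (Fin n), (Equiv.Perm.sign σ : ℂ) *
        (∑ i, (∏ j ∈ Finset.univ.erase i, M x (σ j) j) • M' (σ i) i)) x := by
    simp only [det_apply']
    exact HasDerivAt.fun_sum fun σ _ => (hprod σ).const_mul _
  have hEq : (∑ σ : Equiv.Perm (Fin n), (Equiv.Perm.sign σ : ℂ) *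
        (∑ i, (∏ j ∈ Finset.univ.erase i, M x (σ j) j) • M' (σ i) i))
      = (Matrix.adjugate (M x) * M').trace := by
    have step1 : ∀ i : Fin n,
        (∑ σ : Equiv.Perm (Fin n), (Equiv.Perm.sign σ : ℂ) *
          ((∏ j ∈ Finset.univ.erase i, M x (σ j) j) * M' (σ i) i))
        = ((M x).updateCol i (fun k => M' k i)).det := by
      intro i
      rw [det_apply']
      refine Finset.sum_congr rfl fun σ _ => ?_
      rw [← Finset.mul_prod_erase _ _ (Finset.mem_univ i)]
      rw [Matrix.updateCol_apply, if_pos rfl]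
      have : ∀ j ∈ Finset.univ.erase i,
          ((M x).updateCol i (fun k => M' k i)) (σ j) j = M x (σ j) j := by
        intro j hj
        rw [Matrix.updateCol_apply, if_neg (Finset.mem_erase.mp hj).1]
      rw [Finset.prod_congr rfl this]
      ring
    calc (∑ σ : Equiv.Perm (Fin n), (Equiv.Perm.sign σ : ℂ) *
        (∑ i, (∏ j ∈ Finset.univ.erase i, M x (σ j) j) • M' (σ i) i))
        = ∑ i, ∑ σ : Equiv.Perm (Fin n), (Equiv.Perm.sign σ : ℂ) *
            ((∏ j ∈ Finset.univ.erase i, M x (σ j) j) * M' (σ i) i) := by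
          rw [Finset.sum_comm]
          exact Finset.sum_congr rfl fun σ _ => by rw [Finset.mul_sum]; simp [smul_eq_mul]
      _ = ∑ i, ((M x).updateCol i (fun k => M' k i)).det := by
          exact Finset.sum_congr rfl fun i _ => step1 i
      _ = ∑ i, (Matrix.adjugate (M x) *ᵥ (fun k => M' k i)) i := by
          refine Finset.sum_congr rfl fun i _ => ?_
          rw [← Matrix.cramer_eq_adjugate_mulVec, Matrix.cramer_apply]
      _ = (Matrix.adjugate (M x) * M').trace := by
          simp [Matrix.trace, Matrix.mul_apply, Matrix.mulVec, dotProduct, Matrix.diag]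
  exact hEq ▸ H

lemma updateRow_single_mulVec (B : Matrix (Fin n) (Fin n) ℂ) (i j : Fin n) (c : Fin n → ℂ)
    (hc : B *ᵥ c = 0) (hci : c i = 0) :
    (B.updateRow j (Pi.single i 1)) *ᵥ c = 0 := by
  funext r
  by_cases hr : r = j
  · subst hr
    simp [Matrix.mulVec, dotProduct, Matrix.updateRow_apply, Pi.single_apply, hci]
  · have := congrFun hc r
    simpa [Matrix.mulVec, dotProduct, Matrix.updateRow_apply, hr] using this

lemma adjugate_eq_zero_of_two_le (B : Matrix (Fin n) (Fin n) ℂ)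
    (h : 2 ≤ Module.finrank ℂ (LinearMap.ker B.mulVecLin)) : Matrix.adjugate B = 0 := by
  ext i j
  rw [Matrix.adjugate_apply, Matrix.zero_apply]
  set K := LinearMap.ker B.mulVecLin
  set ψ : K →ₗ[ℂ] ℂ := (LinearMap.proj i).comp K.subtype with hψ
  have hrk := LinearMap.finrank_range_add_finrank_ker ψ
  have hr1 : Module.finrank ℂ (LinearMap.range ψ) ≤ 1 := by
    simpa using Submodule.finrank_le (LinearMap.range ψ)
  have hker_pos : 0 < Module.finrank ℂ (LinearMap.ker ψ) := by omega
  have : Nontrivial (LinearMap.ker ψ) := Module.nontrivial_of_finrank_pos hker_pos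
  obtain ⟨c', hc'⟩ := exists_ne (0 : LinearMap.ker ψ)
  have hcK : ((c' : K) : Fin n → ℂ) ∈ K := (c' : K).2
  have hc0 : ((c' : K) : Fin n → ℂ) ≠ 0 := by
    intro h0
    apply hc'
    ext1
    exact Subtype.ext h0
  have hci : ((c' : K) : Fin n → ℂ) i = 0 := c'.2
  rw [← Matrix.exists_mulVec_eq_zero_iff]
  exact ⟨_, hc0, updateRow_single_mulVec B i j _ (LinearMap.mem_ker.mp hcK) hci⟩

lemma updateColumn_mulVec' (B : Matrix (Fin n) (Fin n) ℂ) (w c : Fin n → ℂ) (i₀ : Fin n) :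
    (B.updateCol i₀ w) *ᵥ c = c i₀ • w + B *ᵥ (Function.update c i₀ 0) := by
  funext r
  simp only [Matrix.mulVec, dotProduct, Matrix.updateCol_apply, Pi.add_apply,
    Pi.smul_apply, smul_eq_mul]
  rw [← Finset.add_sum_erase _ _ (Finset.mem_univ i₀), ← Finset.add_sum_erase _ _ (Finset.mem_univ i₀)]
  have h1 : ∀ k ∈ Finset.univ.erase i₀,
      (if k = i₀ then w r else B r k) * c k = B r k * Function.update c i₀ 0 k := by
    intro k hk
    have hk' := (Finset.mem_erase.mp hk).1
    simp [hk', Function.update_apply]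
  rw [Finset.sum_congr rfl h1]
  simp [Function.update_self]
  ring

lemma adjugate_ne_zero_of_finrank_ker_eq_one (B : Matrix (Fin n) (Fin n) ℂ)
    (h : Module.finrank ℂ (LinearMap.ker B.mulVecLin) = 1) : Matrix.adjugate B ≠ 0 := by
  -- get spanning vector u of the kernel
  have hpos : 0 < Module.finrank ℂ (LinearMap.ker B.mulVecLin) := by omega
  have : Nontrivial (LinearMap.ker B.mulVecLin) := Module.nontrivial_of_finrank_pos hpos
  obtain ⟨u', hu'⟩ := exists_ne (0 : LinearMap.ker B.mulVecLin)
  set u : Fin n → ℂ := (u' : Fin n → ℂ) with hu_def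
  have hu0 : u ≠ 0 := fun h0 => hu' (Subtype.ext h0)
  have huK : B *ᵥ u = 0 := LinearMap.mem_ker.mp u'.2
  have hspan : (Submodule.span ℂ {u}) = LinearMap.ker B.mulVecLin := by
    apply Submodule.eq_of_le_of_finrank_le
    · rw [Submodule.span_le, Set.singleton_subset_iff]; exact u'.2
    · rw [h, finrank_span_singleton hu0]
  -- range is not everything
  have hrk := LinearMap.finrank_range_add_finrank_ker B.mulVecLin
  rw [h] at hrk
  have hfintop : Module.finrank ℂ (Fin n → ℂ) = n := by simp
  have hrange_ne : LinearMap.range B.mulVecLin ≠ ⊤ := by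
    intro htop
    rw [htop] at hrk
    rw [finrank_top, hfintop] at hrk
    omega
  obtain ⟨w, hw⟩ : ∃ w, w ∉ LinearMap.range B.mulVecLin := by
    by_contra h'
    push_neg at h'
    exact hrange_ne (Submodule.eq_top_iff'.mpr h')
  -- coordinate where u is nonzero
  obtain ⟨i₀, hi₀⟩ := Function.ne_iff.mp hu0
  simp only [Pi.zero_apply] at hi₀
  -- the updated matrix is invertible
  have hdet : (B.updateCol i₀ w).det ≠ 0 := by
    intro hdet0
    obtain ⟨c, hc0, hc⟩ := (Matrix.exists_mulVec_eq_zero_iff).mpr hdet0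
    rw [updateColumn_mulVec'] at hc
    have hci₀ : c i₀ = 0 := by
      by_contra hne
      apply hw
      refine ⟨(-(c i₀))⁻¹ • Function.update c i₀ 0, ?_⟩
      have : B *ᵥ (Function.update c i₀ 0) = -(c i₀) • w := by
        have h' : B *ᵥ Function.update c i₀ 0 = -(c i₀ • w) := by
          rw [eq_neg_iff_add_eq_zero, add_comm]; exact hc
        rw [h', neg_smul]
      rw [Matrix.mulVecLin_apply, Matrix.mulVec_smul, this, smul_smul,
        inv_mul_cancel₀ (by simpa using hne), one_smul]
    have hcup : Function.update c i₀ 0 = c := by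
      funext k; by_cases hk : k = i₀ <;> simp [hk, Function.update_apply, hci₀.symm]
    rw [hcup, hci₀, zero_smul, zero_add] at hc
    have : c ∈ Submodule.span ℂ {u} := hspan ▸ (LinearMap.mem_ker.mpr hc)
    obtain ⟨a, ha⟩ := Submodule.mem_span_singleton.mp this
    have : a = 0 := by
      have := congrFun ha i₀
      rw [hci₀] at this
      simp only [Pi.smul_apply, smul_eq_mul] at this
      rcases mul_eq_zero.mp this with h1 | h2
      · exact h1
      · exact absurd h2 hi₀
    rw [this, zero_smul] at ha
    exact hc0 ha.symm
  intro hadj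
  apply hdet
  rw [← Matrix.cramer_apply, Matrix.cramer_eq_adjugate_mulVec, hadj]
  simp

lemma key_structure (B : Matrix (Fin n) (Fin n) ℂ)
    (h : Module.finrank ℂ (LinearMap.ker B.mulVecLin) = 1) :
    ∃ u y : Fin n → ℂ, u ≠ 0 ∧ y ≠ 0 ∧ B *ᵥ u = 0 ∧ Bᵀ *ᵥ y = 0 ∧
      (∀ C : Matrix (Fin n) (Fin n) ℂ, (Matrix.adjugate B * C).trace = y ⬝ᵥ (C *ᵥ u)) ∧
      (∀ c, B *ᵥ c = 0 → ∃ a : ℂ, c = a • u) ∧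
      (∀ c, Bᵀ *ᵥ c = 0 → ∃ a : ℂ, c = a • y) := by
  have hpos : 0 < Module.finrank ℂ (LinearMap.ker B.mulVecLin) := by omega
  have : Nontrivial (LinearMap.ker B.mulVecLin) := Module.nontrivial_of_finrank_pos hpos
  obtain ⟨u', hu'⟩ := exists_ne (0 : LinearMap.ker B.mulVecLin)
  set u : Fin n → ℂ := (u' : Fin n → ℂ) with hu_def
  have hu0 : u ≠ 0 := fun h0 => hu' (Subtype.ext h0)
  have huK : B *ᵥ u = 0 := LinearMap.mem_ker.mp u'.2
  have hspan : (Submodule.span ℂ {u}) = LinearMap.ker B.mulVecLin := by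
    apply Submodule.eq_of_le_of_finrank_le
    · rw [Submodule.span_le, Set.singleton_subset_iff]; exact u'.2
    · rw [h, finrank_span_singleton hu0]
  have hker_u : ∀ c, B *ᵥ c = 0 → ∃ a : ℂ, c = a • u := by
    intro c hc
    have : c ∈ Submodule.span ℂ {u} := hspan ▸ LinearMap.mem_ker.mpr hc
    obtain ⟨a, ha⟩ := Submodule.mem_span_singleton.mp this
    exact ⟨a, ha.symm⟩
  obtain ⟨i₀, hi₀⟩ := Function.ne_iff.mp hu0
  simp only [Pi.zero_apply] at hi₀
  have hdetB : B.det = 0 := Matrix.exists_mulVec_eq_zero_iff.mp ⟨u, hu0, huK⟩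
  -- columns of adjugate are in the kernel
  have hBadj : B * Matrix.adjugate B = 0 := by rw [Matrix.mul_adjugate, hdetB, zero_smul]
  have hcol : ∀ j, ∃ a : ℂ, (fun k => Matrix.adjugate B k j) = a • u := by
    intro j
    apply hker_u
    funext r
    have := congrFun (congrFun hBadj r) j
    simpa [Matrix.mul_apply, Matrix.mulVec, dotProduct] using this
  choose y hy using hcol
  have hadj_entry : ∀ i j, Matrix.adjugate B i j = y j * u i := by
    intro i j
    have := congrFun (hy j) i
    simpa [mul_comm] using this
  have hadj_ne : Matrix.adjugate B ≠ 0 := adjugate_ne_zero_of_finrank_ker_eq_one B h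
  have hy0 : y ≠ 0 := by
    intro h0
    apply hadj_ne
    ext i j
    rw [hadj_entry i j, congrFun h0 j]
    simp
  -- y is a left null vector
  have hadjB : Matrix.adjugate B * B = 0 := by rw [Matrix.adjugate_mul, hdetB, zero_smul]
  have hyB : Bᵀ *ᵥ y = 0 := by
    funext j
    have := congrFun (congrFun hadjB i₀) j
    simp only [Matrix.mul_apply, Matrix.zero_apply] at this
    have h2 : ∑ k, y k * u i₀ * B k j = 0 := by
      rw [← this]
      exact Finset.sum_congr rfl fun k _ => by rw [hadj_entry i₀ k]
    have h3 : u i₀ * ∑ k, B k j * y k = 0 := by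
      rw [Finset.mul_sum, ← h2]
      exact Finset.sum_congr rfl fun k _ => by ring
    rcases mul_eq_zero.mp h3 with h4 | h4
    · exact absurd h4 hi₀
    · simpa [Matrix.mulVec, dotProduct, Matrix.transpose_apply, mul_comm] using h4
  -- trace formula
  have htrace : ∀ C : Matrix (Fin n) (Fin n) ℂ,
      (Matrix.adjugate B * C).trace = y ⬝ᵥ (C *ᵥ u) := by
    intro C
    simp only [Matrix.trace, Matrix.diag, Matrix.mul_apply, dotProduct, Matrix.mulVec]
    rw [Finset.sum_comm]
    refine Finset.sum_congr rfl fun k _ => ?_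
    rw [Finset.mul_sum]
    refine Finset.sum_congr rfl fun i _ => ?_
    rw [hadj_entry i k]
    ring
  -- kernel of transpose is spanned by y
  have hrkT : Module.finrank ℂ (LinearMap.ker Bᵀ.mulVecLin) = 1 := by
    have h1 := LinearMap.finrank_range_add_finrank_ker B.mulVecLin
    have h2 := LinearMap.finrank_range_add_finrank_ker Bᵀ.mulVecLin
    have h3 : Bᵀ.rank = B.rank := Matrix.rank_transpose B
    unfold Matrix.rank at h3
    omega
  have hspanT : (Submodule.span ℂ {y}) = LinearMap.ker Bᵀ.mulVecLin := by
    apply Submodule.eq_of_le_of_finrank_le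
    · rw [Submodule.span_le, Set.singleton_subset_iff]
      exact LinearMap.mem_ker.mpr (show Bᵀ.mulVecLin y = 0 from hyB)
    · rw [hrkT, finrank_span_singleton hy0]
  have hker_y : ∀ c, Bᵀ *ᵥ c = 0 → ∃ a : ℂ, c = a • y := by
    intro c hc
    have : c ∈ Submodule.span ℂ {y} := hspanT ▸ LinearMap.mem_ker.mpr hc
    obtain ⟨a, ha⟩ := Submodule.mem_span_singleton.mp this
    exact ⟨a, ha.symm⟩
  exact ⟨u, y, hu0, hy0, huK, hyB, htrace, hker_u, hker_y⟩

/-- Welters / Lidskii: For an analytic matrix family `A(ε)` and an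
eigenvalue `λ₀` of `A(0)` of algebraic multiplicity `m`, the following are equivalent:
(i) `∂/∂ε det(λ₀I − A(ε))|_{ε=0} ≠ 0`;
(ii) `λ₀` has geometric multiplicity 1 (single `m×m` Jordan block) and there exist
eigenvectors `u₀` of `A(0)` (for `λ₀`) and `v₀` of `A(0)*` (for `conj λ₀`) with
`⟨v₀, A′(0)u₀⟩ ≠ 0`. -/
theorem nonderogatory_eigenvalue_perturbation (n : ℕ)
    (A : ℂ → Matrix (Fin n) (Fin n) ℂ) (hA : AnalyticAt ℂ A 0)
    (lam₀ : ℂ) (m : ℕ) (hm : 0 < m)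
    (hmult : ((A 0).charpoly).rootMultiplicity lam₀ = m) :
    deriv (fun ε : ℂ => (lam₀ • (1 : Matrix (Fin n) (Fin n) ℂ) - A ε).det) 0 ≠ 0 ↔
      (Module.finrank ℂ
          (LinearMap.ker (A 0 - lam₀ • (1 : Matrix (Fin n) (Fin n) ℂ)).mulVecLin) = 1 ∧
        ∃ u₀ : Fin n → ℂ, u₀ ≠ 0 ∧ (A 0).mulVec u₀ = lam₀ • u₀ ∧
          ∃ v₀ : Fin n → ℂ, v₀ ≠ 0 ∧ (A 0)ᴴ.mulVec v₀ = (starRingEnd ℂ lam₀) • v₀ ∧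
            star v₀ ⬝ᵥ (deriv A 0).mulVec u₀ ≠ 0) := by
  classical
  set B : Matrix (Fin n) (Fin n) ℂ := lam₀ • 1 - A 0 with hB
  set A' : Matrix (Fin n) (Fin n) ℂ := deriv A 0 with hA'
  have hdetB : B.det = 0 := by
    rw [hB, ← eval_charpoly']
    have hne : (A 0).charpoly ≠ 0 := ((A 0).charpoly_monic).ne_zero
    have hpos : 0 < ((A 0).charpoly).rootMultiplicity lam₀ := by omega
    exact (Polynomial.rootMultiplicity_pos hne).mp hpos
  have hker_eq : LinearMap.ker (A 0 - lam₀ • (1 : Matrix (Fin n) (Fin n) ℂ)).mulVecLin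
      = LinearMap.ker B.mulVecLin := by
    have hAB : A 0 - lam₀ • (1 : Matrix (Fin n) (Fin n) ℂ) = -B := by rw [hB, neg_sub]
    rw [hAB]
    ext c
    simp [LinearMap.mem_ker, Matrix.mulVecLin_apply, Matrix.neg_mulVec, neg_eq_zero]
  have hDer : HasDerivAt (fun ε : ℂ => (lam₀ • (1 : Matrix (Fin n) (Fin n) ℂ) - A ε).det)
      (-(Matrix.adjugate B * A').trace) 0 := by
    have h1 : ∀ i j, HasDerivAt (fun ε => (lam₀ • (1 : Matrix (Fin n) (Fin n) ℂ) - A ε) i j)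
        ((-A') i j) 0 := by
      intro i j
      have := (entry_hasDerivAt A hA i j).const_sub
        ((lam₀ • (1 : Matrix (Fin n) (Fin n) ℂ)) i j)
      simpa [hA'] using this
    have h2 := jacobi (fun ε => lam₀ • (1 : Matrix (Fin n) (Fin n) ℂ) - A ε) (-A') 0 h1
    have h3 : Matrix.adjugate (lam₀ • (1 : Matrix (Fin n) (Fin n) ℂ) - A 0) = Matrix.adjugate B := by
      rw [hB]
    rw [h3, Matrix.mul_neg, Matrix.trace_neg] at h2
    exact h2
  have hderiv_eq : deriv (fun ε : ℂ => (lam₀ • (1 : Matrix (Fin n) (Fin n) ℂ) - A ε).det) 0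
      = -(Matrix.adjugate B * A').trace := hDer.deriv
  rw [hderiv_eq, hker_eq]
  constructor
  · intro hne
    have htr_ne : (Matrix.adjugate B * A').trace ≠ 0 := fun h0 => hne (by rw [h0, neg_zero])
    have hadj_ne : Matrix.adjugate B ≠ 0 := by
      intro h0; exact htr_ne (by rw [h0, Matrix.zero_mul, Matrix.trace_zero])
    have hfr : Module.finrank ℂ (LinearMap.ker B.mulVecLin) = 1 := by
      obtain ⟨v, hv0, hv⟩ := Matrix.exists_mulVec_eq_zero_iff.mpr hdetB
      have hnt : Nontrivial (LinearMap.ker B.mulVecLin) :=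
        ⟨⟨⟨v, LinearMap.mem_ker.mpr hv⟩, 0, by simp [Subtype.ext_iff, hv0]⟩⟩
      have h1 : 0 < Module.finrank ℂ (LinearMap.ker B.mulVecLin) :=
        Module.finrank_pos_iff.mpr hnt
      have h2 : Module.finrank ℂ (LinearMap.ker B.mulVecLin) < 2 := by
        by_contra h2
        push_neg at h2
        exact hadj_ne (adjugate_eq_zero_of_two_le B h2)
      omega
    obtain ⟨u, y, hu0, hy0, huK, hyB, htrace, hker_u, hker_y⟩ := key_structure B hfr
    have hT : (A 0)ᵀ *ᵥ y = lam₀ • y := by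
      have hy' := hyB
      rw [hB, Matrix.transpose_sub, Matrix.transpose_smul, Matrix.transpose_one,
        Matrix.sub_mulVec, sub_eq_zero, Matrix.smul_mulVec, Matrix.one_mulVec] at hy'
      exact hy'.symm
    refine ⟨hfr, u, hu0, ?_, star y, ?_, ?_, ?_⟩
    · have hu' := huK
      rw [hB, Matrix.sub_mulVec, sub_eq_zero, Matrix.smul_mulVec,
        Matrix.one_mulVec] at hu'
      exact hu'.symm
    · simpa using hy0
    · funext j
      have hj := congrFun hT j
      simp only [Matrix.mulVec, dotProduct, Matrix.transpose_apply, Pi.smul_apply,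
        smul_eq_mul] at hj
      have hconj := congrArg (starRingEnd ℂ) hj
      simp only [map_sum, _root_.map_mul] at hconj
      simpa [Matrix.mulVec, dotProduct, Matrix.conjTranspose_apply, Pi.smul_apply,
        smul_eq_mul, Pi.star_apply, Complex.star_def] using hconj
    · rw [star_star]
      intro h0
      exact htr_ne (by rw [htrace A']; exact h0)
  · rintro ⟨hfr, u₀, hu₀, heig, v₀, hv₀, heig', hip⟩
    obtain ⟨u, y, hu0, hy0, huK, hyB, htrace, hker_u, hker_y⟩ := key_structure B hfr
    have hBu₀ : B *ᵥ u₀ = 0 := by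
      rw [hB, Matrix.sub_mulVec, Matrix.smul_mulVec, Matrix.one_mulVec, heig, sub_self]
    obtain ⟨α, hα⟩ := hker_u u₀ hBu₀
    have hα0 : α ≠ 0 := by
      rintro rfl
      rw [zero_smul] at hα
      exact hu₀ hα
    have hTv : (A 0)ᵀ *ᵥ (star v₀) = lam₀ • (star v₀) := by
      funext j
      have hj := congrFun heig' j
      simp only [Matrix.mulVec, dotProduct, Matrix.conjTranspose_apply, Pi.smul_apply,
        smul_eq_mul] at hj
      have hconj := congrArg (starRingEnd ℂ) hj
      simp only [map_sum, _root_.map_mul] at hconj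
      simpa [Matrix.mulVec, dotProduct, Matrix.transpose_apply, Pi.smul_apply,
        smul_eq_mul, Pi.star_apply, Complex.star_def] using hconj
    have hBv : Bᵀ *ᵥ (star v₀) = 0 := by
      rw [hB, Matrix.transpose_sub, Matrix.transpose_smul, Matrix.transpose_one,
        Matrix.sub_mulVec, Matrix.smul_mulVec, Matrix.one_mulVec, hTv, sub_self]
    obtain ⟨β, hβ⟩ := hker_y (star v₀) hBv
    have hβ0 : β ≠ 0 := by
      rintro rfl
      rw [zero_smul] at hβ
      exact hv₀ (by simpa using congrArg star hβ)
    have hdot : star v₀ ⬝ᵥ A' *ᵥ u₀ = β * (α * (y ⬝ᵥ A' *ᵥ u)) := by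
      rw [hβ, hα, Matrix.mulVec_smul, smul_dotProduct, dotProduct_smul,
        smul_eq_mul, smul_eq_mul]
    intro h0
    apply hip
    rw [hdot, ← htrace A']
    rw [neg_eq_zero] at h0
    rw [h0, mul_zero, mul_zero]
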